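/- Define q(m) to be the least prime not dividing m (equivalently, the least prime coprime to m). For every integer k ≥ 1 there exists a positive integer C such that for all integers m ≥ C, q(m)^k < m. -/

import Mathlib

/-- The least prime not dividing `m`. -/
noncomputable def leastPrimeCoprime (m : ℕ) : ℕ := sInf {p : ℕ | p.Prime ∧ ¬ p ∣ m}

/-- A Bertrand prime in the dyadic interval `(2^i, 2^(i+1)]`. -/
noncomputable def bertrandPrime (i : ℕ) : ℕ :=
  (Nat.exists_prime_lt_and_le_two_mul (2 ^ i) (by positivity)).choose

lemma bertrandPrime_prime (i : ℕ) : (bertrandPrime i).Prime :=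
  (Nat.exists_prime_lt_and_le_two_mul (2 ^ i) (by positivity)).choose_spec.1

lemma bertrandPrime_gt (i : ℕ) : 2 ^ i < bertrandPrime i :=
  (Nat.exists_prime_lt_and_le_two_mul (2 ^ i) (by positivity)).choose_spec.2.1

lemma bertrandPrime_le (i : ℕ) : bertrandPrime i ≤ 2 ^ (i + 1) := by
  have : bertrandPrime i ≤ 2 * 2 ^ i := (Nat.exists_prime_lt_and_le_two_mul (2 ^ i) (by positivity)).choose_spec.2.2
  simpa [pow_succ, mul_comm] using this

lemma bertrandPrime_strictMono : StrictMono bertrandPrime := by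
  intro i j hij
  calc bertrandPrime i ≤ 2 ^ (i + 1) := bertrandPrime_le i
    _ ≤ 2 ^ j := Nat.pow_le_pow_right (by norm_num) hij
    _ < bertrandPrime j := bertrandPrime_gt j

theorem stmt_4 (k : ℕ) (hk : 1 ≤ k) :
    ∃ C : ℕ, 0 < C ∧ ∀ m : ℕ, C ≤ m → (leastPrimeCoprime m) ^ k < m := by
  refine ⟨2 ^ (k * (2 * k + 3)) + 1, by positivity, fun m hm => ?_⟩
  have hm0 : 0 < m := lt_of_lt_of_le (by positivity) hm
  set p := leastPrimeCoprime m with hpdef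
  have hne : {q : ℕ | q.Prime ∧ ¬ q ∣ m}.Nonempty := by
    obtain ⟨q, hq1, hq2⟩ := Nat.exists_infinite_primes (m + 1)
    exact ⟨q, hq2, fun hd => absurd (Nat.le_of_dvd hm0 hd) (by omega)⟩
  have hpmem : p.Prime ∧ ¬ p ∣ m := Nat.sInf_mem hne
  have hmin : ∀ q : ℕ, q.Prime → q < p → q ∣ m := by
    intro q hq hlt
    by_contra hnd
    have hqmem : q ∈ {r : ℕ | r.Prime ∧ ¬ r ∣ m} := ⟨hq, hnd⟩
    exact absurd (Nat.sInf_le hqmem) (not_le.mpr hlt)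
  by_cases hsmall : p < 2 ^ (2 * k + 3)
  · calc p ^ k < (2 ^ (2 * k + 3)) ^ k := Nat.pow_lt_pow_left hsmall (by omega)
      _ = 2 ^ (k * (2 * k + 3)) := by rw [← pow_mul, mul_comm]
      _ < 2 ^ (k * (2 * k + 3)) + 1 := by omega
      _ ≤ m := hm
  · push_neg at hsmall
    set L := Nat.log 2 p with hLdef
    have hL1 : 2 ^ L ≤ p := Nat.pow_log_le_self 2 hpmem.1.pos.ne'
    have hL2 : p < 2 ^ (L + 1) := Nat.lt_pow_succ_log_self (by norm_num) p
    have hLge : 2 * k + 3 ≤ L := by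
      have h := lt_of_le_of_lt hsmall hL2
      have := (Nat.pow_lt_pow_iff_right (a := 2) (by norm_num)).mp h
      omega
    have hp2 : 2 < p := by
      have h1 : (2 : ℕ) < 2 ^ (2 * k + 3) := by
        have : 2 ^ 1 < 2 ^ (2 * k + 3) := Nat.pow_lt_pow_right (by norm_num) (by omega)
        simpa using this
      omega
    have hLlt : 2 ^ L < p := by
      rcases lt_or_eq_of_le hL1 with h | h
      · exact h
      · exfalso
        have h2dvd : (2 : ℕ) ∣ p := by
          rw [← h]; exact dvd_pow_self 2 (by omega : L ≠ 0)
        have := (Nat.Prime.eq_one_or_self_of_dvd hpmem.1 2 h2dvd)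
        omega
    -- the finset of known prime divisors of m
    set S : Finset ℕ := insert 2 ((Finset.Ico 1 L).image bertrandPrime) with hSdef
    have hmem : ∀ q ∈ S, q.Prime ∧ q ∣ m := by
      intro q hq
      rw [hSdef, Finset.mem_insert] at hq
      rcases hq with rfl | hq
      · exact ⟨Nat.prime_two, hmin 2 Nat.prime_two hp2⟩
      · obtain ⟨i, hi, rfl⟩ := Finset.mem_image.mp hq
        rw [Finset.mem_Ico] at hi
        have hlt : bertrandPrime i < p :=
          lt_of_le_of_lt (le_trans (bertrandPrime_le i)
            (Nat.pow_le_pow_right (by norm_num) (by omega))) hLlt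
        exact ⟨bertrandPrime_prime i, hmin _ (bertrandPrime_prime i) hlt⟩
    have hdvd : (∏ q ∈ S, q) ∣ m :=
      Finset.prod_primes_dvd m (fun q hq => (hmem q hq).1.prime) (fun q hq => (hmem q hq).2)
    have hmge : (∏ q ∈ S, q) ≤ m := Nat.le_of_dvd hm0 hdvd
    have h2notin : 2 ∉ (Finset.Ico 1 L).image bertrandPrime := by
      simp only [Finset.mem_image, Finset.mem_Ico, not_exists]
      rintro i ⟨⟨hi1, _⟩, hbe⟩
      have := bertrandPrime_gt i
      have : 2 ^ 1 ≤ 2 ^ i := Nat.pow_le_pow_right (by norm_num) hi1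
      omega
    have hprodS : (∏ q ∈ S, q) = 2 * ∏ i ∈ Finset.Ico 1 L, bertrandPrime i := by
      rw [hSdef, Finset.prod_insert h2notin,
        Finset.prod_image (fun a _ b _ h => bertrandPrime_strictMono.injective h)]
    have hlb : 2 ^ (1 + ∑ i ∈ Finset.Ico 1 L, i) ≤ ∏ q ∈ S, q := by
      rw [hprodS, pow_add, pow_one]
      refine Nat.mul_le_mul_left 2 ?_
      rw [← Finset.prod_pow_eq_pow_sum]
      exact Finset.prod_le_prod' fun i _ => (bertrandPrime_gt i).le
    have hsum : ∑ i ∈ Finset.Ico 1 L, i = ∑ i ∈ Finset.range L, i := by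
      rw [Finset.range_eq_Ico, ← Finset.sum_Ico_consecutive _ (by omega : (0:ℕ) ≤ 1) (by omega : 1 ≤ L)]
      simp
    have hgauss : (∑ i ∈ Finset.range L, i) * 2 = L * (L - 1) := Finset.sum_range_id_mul_two L
    have hexp : (L + 1) * k ≤ 1 + ∑ i ∈ Finset.Ico 1 L, i := by
      rw [hsum]
      set s := ∑ i ∈ Finset.range L, i
      obtain ⟨t, ht⟩ : ∃ t, L = t + (2 * k + 3) := ⟨L - (2 * k + 3), by omega⟩
      have hg : s * 2 = (t + (2 * k + 3)) * (t + 2 * k + 2) := by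
        rw [hgauss, ht]; congr 1
      nlinarith [hg, ht]
    calc p ^ k < (2 ^ (L + 1)) ^ k := Nat.pow_lt_pow_left hL2 (by omega)
      _ = 2 ^ ((L + 1) * k) := by rw [pow_mul]
      _ ≤ 2 ^ (1 + ∑ i ∈ Finset.Ico 1 L, i) := by
          exact Nat.pow_le_pow_right (by norm_num) hexp
      _ ≤ ∏ q ∈ S, q := hlb
      _ ≤ m := hmge
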